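/- Let p : Ñ → N be a covering map with Ñ connected whose fibers have finite cardinality d, let f : M → N be continuous, let f̃ : M → Ñ be a lifting of f (p ∘ f̃ = f), let * ∈ N and *̃ ∈ p⁻¹({*}). Then MC(f, *) ≥ d · MC(f̃, *̃), where MC(f, *) and MC(f̃, *̃) denote the minimum numbers of coincidence points of f with the constant map at * and of f̃ with the constant map at *̃, respectively. (Inequality from Remark 1.16.) -/

import Mathlib

open scoped Manifold ContinuousMap unitInterval Topology
open CategoryTheory

universe u v

/-- The minimum number of coincidence points, over all pairs of maps homotopic to the
given pair, as a value in `ℕ ∪ {∞}`. -/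
noncomputable def MC {M : Type u} {N : Type v} [TopologicalSpace M] [TopologicalSpace N]
    (f₁ f₂ : C(M, N)) : ℕ∞ :=
  sInf {k : ℕ∞ | ∃ g₁ g₂ : C(M, N), g₁.Homotopic f₁ ∧ g₂.Homotopic f₂ ∧
    k = ({x | g₁ x = g₂ x} : Set M).encard}

/-- The minimum number of path components of the coincidence set, over all pairs of maps
homotopic to the given pair, as a value in `ℕ ∪ {∞}`. -/
noncomputable def MCC {M : Type u} {N : Type v} [TopologicalSpace M] [TopologicalSpace N]
    (f₁ f₂ : C(M, N)) : ℕ∞ :=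
  sInf {k : ℕ∞ | ∃ g₁ g₂ : C(M, N), g₁.Homotopic f₁ ∧ g₂.Homotopic f₂ ∧
    k = ENat.card (ZerothHomotopy {x : M // g₁ x = g₂ x})}

/-- A pair of maps is loose if they can be deformed away from one another,
i.e. they are homotopic to a coincidence free pair. -/
def Loose {M : Type u} {N : Type v} [TopologicalSpace M] [TopologicalSpace N]
    (f₁ f₂ : C(M, N)) : Prop :=
  ∃ g₁ g₂ : C(M, N), g₁.Homotopic f₁ ∧ g₂.Homotopic f₂ ∧ ∀ x : M, g₁ x ≠ g₂ x

/-- The path space `E(f₁, f₂) = {(x, θ) ∈ M × P(N) | θ(0) = f₁(x), θ(1) = f₂(x)}`,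
where `P(N)` carries the compact-open topology. -/
abbrev ESpace {M : Type u} {N : Type v} [TopologicalSpace M] [TopologicalSpace N]
    (f₁ f₂ : C(M, N)) : Type _ :=
  {p : M × C(unitInterval, N) // p.2 0 = f₁ p.1 ∧ p.2 1 = f₂ p.1}

/-- The path space `E(g, y) = {(x, θ) ∈ M × P(Y) | θ(0) = g(x), θ(1) = y}`. -/
abbrev EBase {M : Type u} {Y : Type v} [TopologicalSpace M] [TopologicalSpace Y]
    (g : C(M, Y)) (y : Y) : Type _ :=
  {p : M × C(unitInterval, Y) // p.2 0 = g p.1 ∧ p.2 1 = y}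

/-- The unit sphere `S^k ⊆ ℝ^(k+1)`. -/
abbrev Sph (k : ℕ) : Type := Metric.sphere (0 : EuclideanSpace ℝ (Fin (k + 1))) 1

/-- The homomorphism induced by a continuous map on fundamental groups. -/
noncomputable def π₁map {X Y : Type u} [TopologicalSpace X] [TopologicalSpace Y]
    (f : C(X, Y)) (x : X) :
    Aut (FundamentalGroupoid.mk x) →* Aut (FundamentalGroupoid.mk (f x)) :=
  CategoryTheory.Functor.mapAut (⟨x⟩ : FundamentalGroupoid X)
    (show FundamentalGroupoid X ⥤ FundamentalGroupoid Y from
      FundamentalGroupoid.fundamentalGroupoidFunctor.map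
        (show TopCat.of X ⟶ TopCat.of Y from TopCat.ofHom f))

/-- A space admitting everywhere charts into a locally path-connected space is
locally path-connected. -/
theorem myLocPathConnected {X Y : Type*} [TopologicalSpace X] [TopologicalSpace Y]
    [LocallyPathConnectedSpace Y] (h : ∀ x : X, ∃ e : OpenPartialHomeomorph X Y, x ∈ e.source) :
    LocallyPathConnectedSpace X := by
  constructor
  intro x
  rw [Filter.hasBasis_self]
  intro uu huu
  obtain ⟨e, hx⟩ := h x
  set s : Set X := e.source ∩ interior uu with hs_def
  have hs : IsOpen s := e.open_source.inter isOpen_interior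
  have hxs : x ∈ s := ⟨hx, mem_interior_iff_mem_nhds.mpr huu⟩
  have himg : IsOpen (e '' s) := e.isOpen_image_of_subset_source hs Set.inter_subset_left
  have hexs : e x ∈ e '' s := Set.mem_image_of_mem _ hxs
  set W := pathComponentIn (e '' s) (e x) with hW_def
  have hWo : IsOpen W := himg.pathComponentIn _
  have hWpc : IsPathConnected W := isPathConnected_pathComponentIn hexs
  have hWsub : W ⊆ e '' s := pathComponentIn_subset
  have hWtarget : W ⊆ e.target := hWsub.trans (by
    rw [← e.image_source_eq_target]; exact Set.image_mono Set.inter_subset_left)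
  refine ⟨e.symm '' W, ?_, ?_, ?_⟩
  · exact (e.isOpen_image_symm_of_subset_target hWo hWtarget).mem_nhds
      ⟨e x, mem_pathComponentIn_self hexs, e.left_inv hx⟩
  · exact hWpc.image' (e.continuousOn_symm.mono hWtarget)
  · rintro _ ⟨w, hw, rfl⟩
    obtain ⟨q, hq, rfl⟩ := hWsub hw
    rw [e.left_inv hq.1]
    exact interior_subset hq.2

/-- Counting: finitely many pairwise disjoint subsets of `C0`, each of `encard ≥ μ`. -/
theorem myEncardAux {α ι : Type*} [Fintype ι] (C : ι → Set α) (C0 : Set α)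
    (hsub : ∀ i, C i ⊆ C0) (hdisj : ∀ i j, i ≠ j → Disjoint (C i) (C j)) (μ : ℕ∞)
    (hμ : ∀ i, μ ≤ (C i).encard) : (Fintype.card ι : ℕ∞) * μ ≤ C0.encard := by
  classical
  have key : ∀ s : Finset ι, (s.card : ℕ∞) * μ ≤ (⋃ i ∈ s, C i).encard := by
    intro s
    induction s using Finset.induction_on with
    | empty => simp
    | @insert a s ha ih =>
      rw [Finset.card_insert_of_notMem ha, Finset.set_biUnion_insert]
      have hdis : Disjoint (C a) (⋃ i ∈ s, C i) := by
        simp only [Set.disjoint_iUnion_right]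
        exact fun i hi => hdisj a i (by rintro rfl; exact ha hi)
      rw [Set.encard_union_eq hdis]
      have hc : ((s.card + 1 : ℕ) : ℕ∞) * μ = μ + (s.card : ℕ∞) * μ := by push_cast; ring
      rw [hc]
      exact add_le_add (hμ a) ih
  have h1 := key Finset.univ
  rw [Finset.card_univ] at h1
  refine h1.trans (Set.encard_le_encard ?_)
  exact Set.iUnion₂_subset fun i _ => hsub i

/-- Homotopy lifting property for covering maps, for "stopped" homotopies
parametrized by `ℝ` (constant outside `[0,1]`). -/
theorem myHLP {Etot X : Type*} [TopologicalSpace Etot] [TopologicalSpace X] {p : Etot → X}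
    (hp : IsCoveringMap p) {Z : Type*} [TopologicalSpace Z]
    (H : Z × ℝ → X) (hH : Continuous H)
    (hstop : ∀ z t, H (z, t) = H (z, max (min t 1) 0))
    (g₀ : Z → Etot) (hg₀ : Continuous g₀) (h0 : ∀ z, p (g₀ z) = H (z, 0)) :
    ∃ G : Z × ℝ → Etot, Continuous G ∧ (∀ w, p (G w) = H w) ∧ ∀ z, G (z, 0) = g₀ z := by
  classical
  -- Step 1: local lifts on a neighborhood of each point of `Z`
  have main : ∀ z : Z, ∃ V : Set Z, IsOpen V ∧ z ∈ V ∧ ∃ L : ↥V × ℝ → Etot,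
      Continuous L ∧ (∀ (x : ↥V) (t : ℝ), p (L (x, t)) = H (x.1, t)) ∧
      (∀ x : ↥V, L (x, 0) = g₀ x.1) := by
    intro z
    have key : ∀ t : ℝ, ∃ (u : Set Z) (v : Set ℝ)
        (T : Bundle.Trivialization (p ⁻¹' {H (z, t)}) p),
        IsOpen u ∧ IsOpen v ∧ z ∈ u ∧ t ∈ v ∧ ∀ x ∈ u, ∀ s ∈ v, H (x, s) ∈ T.baseSet := by
      intro t
      have hrange : IsClopen (Set.range p) := by
        refine ⟨?_, hp.isOpenMap.isOpen_range⟩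
        rw [← isOpen_compl_iff, isOpen_iff_forall_mem_open]
        intro x hx
        obtain ⟨_, U, hxU, hU, _, Hh, _⟩ := hp x
        refine ⟨U, fun u hu => ?_, hU, hxU⟩
        rintro ⟨e, rfl⟩
        exact hx ⟨(Hh ⟨e, hu⟩).2.1, (Hh ⟨e, hu⟩).2.2⟩
      have hS : IsClopen ((fun s : ℝ => H (z, s)) ⁻¹' Set.range p) :=
        hrange.preimage (hH.comp (continuous_const.prodMk continuous_id))
      haveI hne : Nonempty (p ⁻¹' {H (z, t)}) := by
        have hSu := hS.eq_univ ⟨0, g₀ z, h0 z⟩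
        have ht : t ∈ (fun s : ℝ => H (z, s)) ⁻¹' Set.range p := hSu ▸ Set.mem_univ t
        obtain ⟨e, he⟩ := ht
        exact ⟨⟨e, he⟩⟩
      set T := (hp (H (z, t))).toTrivialization with hT_def
      have hmem : H (z, t) ∈ T.baseSet := (hp (H (z, t))).mem_toTrivialization_baseSet
      have hopen : IsOpen (H ⁻¹' T.baseSet) := T.open_baseSet.preimage hH
      rw [isOpen_prod_iff] at hopen
      obtain ⟨u, v, hu, hv, hzu, htv, huv⟩ := hopen z t hmem
      exact ⟨u, v, T, hu, hv, hzu, htv, fun x hx s hs => huv (Set.mk_mem_prod hx hs)⟩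
    choose u v T hu hv hzu htv hT using key
    obtain ⟨δ, hδpos, hδ⟩ := lebesgue_number_lemma_of_metric
      (isCompact_Icc (a := (0:ℝ)) (b := 1)) (fun t => hv t)
      (fun s _ => Set.mem_iUnion.2 ⟨s, htv s⟩)
    obtain ⟨n, hn⟩ := exists_nat_one_div_lt hδpos
    set Nn : ℕ := n + 1 with hNn_def
    have hNpos : (0:ℝ) < (Nn : ℝ) := by positivity
    have hinv : (1:ℝ) / (Nn : ℝ) < δ := by
      have : ((Nn : ℝ)) = (n : ℝ) + 1 := by rw [hNn_def, Nat.cast_succ]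
      rw [this]; exact hn
    have hsub : ∀ j : ℕ, ∃ t : ℝ, j < Nn →
        ∀ s ∈ Set.Icc ((j:ℝ)/(Nn:ℝ)) (((j:ℝ)+1)/(Nn:ℝ)), s ∈ v t := by
      intro j
      by_cases hj : j < Nn
      · have hjle : (j:ℝ) ≤ (Nn:ℝ) := Nat.cast_le.mpr hj.le
        have hmem : (j:ℝ)/(Nn:ℝ) ∈ Set.Icc (0:ℝ) 1 :=
          ⟨by positivity, by rw [div_le_one hNpos]; exact hjle⟩
        obtain ⟨t, ht⟩ := hδ _ hmem
        refine ⟨t, fun _ s hs => ht ?_⟩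
        rw [Metric.mem_ball, Real.dist_eq, abs_sub_lt_iff]
        have hsplit : ((j:ℝ)+1)/(Nn:ℝ) = (j:ℝ)/(Nn:ℝ) + 1/(Nn:ℝ) := by ring
        constructor
        · linarith [hs.2, hinv]
        · linarith [hs.1, hδpos, hinv]
      · exact ⟨0, fun h => absurd h hj⟩
    choose tj htj using hsub
    set V : Set Z := ⋂ j ∈ Finset.range Nn, u (tj j) with hV_def
    have hVopen : IsOpen V := isOpen_biInter_finset (fun j _ => hu (tj j))
    have hzV : z ∈ V := Set.mem_biInter fun j _ => hzu (tj j)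
    have hVsub : ∀ j : ℕ, j < Nn → ∀ x : ↥V, ∀ s ∈ Set.Icc ((j:ℝ)/(Nn:ℝ)) (((j:ℝ)+1)/(Nn:ℝ)),
        H (x.1, s) ∈ (T (tj j)).baseSet := by
      intro j hj x s hs
      have hxu : x.1 ∈ u (tj j) := by
        have hxV : (x : Z) ∈ ⋂ j ∈ Finset.range Nn, u (tj j) := x.2
        exact Set.mem_iInter₂.mp hxV j (Finset.mem_range.mpr hj)
      exact hT (tj j) x.1 hxu s (htj j hj s hs)
    -- induction on the number of steps
    have hrec : ∀ k : ℕ, k ≤ Nn → ∃ L : ↥V × ℝ → Etot, Continuous L ∧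
        (∀ x : ↥V, L (x, 0) = g₀ x.1) ∧
        (∀ (x : ↥V) (t : ℝ), p (L (x, t)) = H (x.1, max (min t ((k:ℝ)/(Nn:ℝ))) 0)) := by
      intro k
      induction k with
      | zero =>
        intro _
        refine ⟨fun w => g₀ w.1.1,
          hg₀.comp (continuous_subtype_val.comp continuous_fst), fun _ => rfl, ?_⟩
        intro x t
        have h1 : max (min t (((0:ℕ):ℝ)/(Nn:ℝ))) 0 = 0 := by
          simp only [Nat.cast_zero, zero_div]
          exact max_eq_right (min_le_right _ _)
        rw [h1]
        exact h0 x.1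
      | succ k ih =>
        intro hk1
        have hk : k < Nn := hk1
        obtain ⟨L, hLc, hL0, hLp⟩ := ih (Nat.le_of_lt hk)
        set T' := T (tj k) with hT'_def
        set sk : ℝ := (k:ℝ)/(Nn:ℝ) with hsk_def
        set sk1 : ℝ := ((k:ℝ)+1)/(Nn:ℝ) with hsk1_def
        have hsk0 : 0 ≤ sk := by positivity
        have hsksk1 : sk ≤ sk1 := by
          rw [hsk_def, hsk1_def, div_le_div_iff₀ hNpos hNpos]
          nlinarith
        have ha_cont : Continuous (fun x : ↥V => L (x, sk)) :=
          hLc.comp (continuous_id.prodMk continuous_const)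
        have hpa : ∀ x : ↥V, p (L (x, sk)) = H (x.1, sk) := by
          intro x
          rw [hLp x sk, min_self, max_eq_left hsk0]
        have hmemBase : ∀ (x : ↥V), ∀ s ∈ Set.Icc sk sk1, H (x.1, s) ∈ T'.baseSet :=
          fun x s hs => hVsub k hk x s hs
        have hmemsrc : ∀ x : ↥V, L (x, sk) ∈ T'.source := fun x =>
          T'.mem_source.mpr (by rw [hpa x]; exact hmemBase x sk ⟨le_rfl, hsksk1⟩)
        set B : ↥V × ℝ → Etot := fun w =>
          T'.toOpenPartialHomeomorph.symm
            (H (w.1.1, max (min w.2 sk1) sk), (T' (L (w.1, sk))).2) with hB_def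
        have hclampmem : ∀ t : ℝ, max (min t sk1) sk ∈ Set.Icc sk sk1 :=
          fun t => ⟨le_max_right _ _, max_le (min_le_right _ _) hsksk1⟩
        have hBtarget : ∀ w : ↥V × ℝ,
            (H (w.1.1, max (min w.2 sk1) sk), (T' (L (w.1, sk))).2) ∈ T'.target :=
          fun w => T'.mem_target.mpr (hmemBase w.1 _ (hclampmem w.2))
        have hBc : Continuous B := by
          refine T'.toOpenPartialHomeomorph.continuousOn_symm.comp_continuous ?_ hBtarget
          refine Continuous.prodMk ?_ ?_
          · exact hH.comp ((continuous_subtype_val.comp continuous_fst).prodMk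
              ((continuous_snd.min continuous_const).max continuous_const))
          · have hf : Continuous fun w : ↥V × ℝ => L (w.1, sk) :=
              hLc.comp (continuous_fst.prodMk continuous_const)
            have hTa : Continuous (⇑T'.toOpenPartialHomeomorph ∘ fun w : ↥V × ℝ => L (w.1, sk)) :=
              T'.toOpenPartialHomeomorph.continuousOn.comp_continuous hf (fun w => hmemsrc w.1)
            exact hTa.snd
        have hbd : ∀ w : ↥V × ℝ, w.2 = sk → L w = B w := by
          intro w hw
          have h1 : max (min w.2 sk1) sk = sk := by
            rw [hw, min_eq_left hsksk1, max_self]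
          have h2 : (H (w.1.1, max (min w.2 sk1) sk), (T' (L (w.1, sk))).2)
              = T' (L (w.1, sk)) := by
            rw [h1]
            exact Prod.ext_iff.mpr
              ⟨(hpa w.1).symm.trans (T'.coe_fst (hmemsrc w.1)).symm, rfl⟩
          simp only [hB_def]
          rw [h2]
          conv_lhs => rw [show w = (w.1, sk) from Prod.ext_iff.mpr ⟨rfl, hw⟩]
          exact (T'.toOpenPartialHomeomorph.left_inv (hmemsrc w.1)).symm
        have hcast : (((k+1:ℕ)):ℝ)/(Nn:ℝ) = sk1 := by
          rw [hsk1_def]; push_cast; ring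
        refine ⟨fun w => if w.2 ≤ sk then L w else B w,
          Continuous.if_le hLc hBc continuous_snd continuous_const hbd, ?_, ?_⟩
        · intro x
          have hbeta : (fun w : ↥V × ℝ => if w.2 ≤ sk then L w else B w) (x, 0)
              = if (0:ℝ) ≤ sk then L (x, 0) else B (x, 0) := rfl
          rw [hbeta, if_pos hsk0]
          exact hL0 x
        · intro x t
          have hbeta : (fun w : ↥V × ℝ => if w.2 ≤ sk then L w else B w) (x, t)
              = if t ≤ sk then L (x, t) else B (x, t) := rfl
          rw [hbeta, hcast]
          by_cases ht : t ≤ sk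
          · rw [if_pos ht, hLp x t]
            have h1 : min t sk = t := min_eq_left ht
            have h2 : min t sk1 = t := min_eq_left (ht.trans hsksk1)
            rw [h1, h2]
          · rw [if_neg ht]
            have ht' : sk ≤ t := le_of_not_ge ht
            have h3 : p (B (x, t)) = H (x.1, max (min t sk1) sk) :=
              T'.proj_symm_apply (hBtarget (x, t))
            rw [h3]
            have h4 : sk ≤ min t sk1 := le_min ht' hsksk1
            rw [max_eq_left h4, max_eq_left (hsk0.trans h4)]
    obtain ⟨L, hLc, hL0, hLp⟩ := hrec Nn le_rfl
    refine ⟨V, hVopen, hzV, L, hLc, ?_, hL0⟩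
    intro x t
    rw [hLp x t]
    have h1 : (Nn:ℝ)/(Nn:ℝ) = 1 := div_self (ne_of_gt hNpos)
    rw [h1]
    exact (hstop x.1 t).symm
  -- Step 2: glue the local lifts
  choose V hVopen hVz L hLc hLp hL0 using main
  refine ⟨fun w => L w.1 (⟨w.1, hVz w.1⟩, w.2), ?_, fun w => hLp w.1 _ w.2, fun z => hL0 z _⟩
  rw [continuous_iff_continuousAt]
  rintro ⟨z₀, t₀⟩
  have huniq : ∀ (x : Z) (hx : x ∈ V z₀),
      (fun t => L x (⟨x, hVz x⟩, t)) = fun t => L z₀ (⟨x, hx⟩, t) := by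
    intro x hx
    refine hp.eq_of_comp_eq ((hLc x).comp (continuous_const.prodMk continuous_id))
      ((hLc z₀).comp (continuous_const.prodMk continuous_id)) ?_ 0 ?_
    · funext t
      simp only [Function.comp_apply]
      rw [hLp x _ t, hLp z₀ _ t]
    · rw [hL0 x _, hL0 z₀ _]
  set F : Z × ℝ → Etot := fun w =>
    if h : w.1 ∈ V z₀ then L z₀ (⟨w.1, h⟩, w.2) else g₀ w.1 with hF_def
  have hFc : ContinuousOn F ((V z₀) ×ˢ (Set.univ : Set ℝ)) := by
    rw [continuousOn_iff_continuous_restrict]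
    have hres : ((V z₀) ×ˢ (Set.univ : Set ℝ)).domRestrict F
        = fun w : ↥((V z₀) ×ˢ (Set.univ : Set ℝ)) => L z₀ (⟨w.1.1, w.2.1⟩, w.1.2) := by
      funext w
      simp only [Set.domRestrict_apply, hF_def, dif_pos w.2.1]
    rw [hres]
    exact (hLc z₀).comp ((Continuous.subtype_mk
      (continuous_fst.comp continuous_subtype_val) _).prodMk
      (continuous_snd.comp continuous_subtype_val))
  have hmemnhds : (V z₀) ×ˢ (Set.univ : Set ℝ) ∈ 𝓝 (z₀, t₀) :=
    ((hVopen z₀).prod isOpen_univ).mem_nhds ⟨hVz z₀, Set.mem_univ _⟩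
  have hFat : ContinuousAt F (z₀, t₀) := hFc.continuousAt hmemnhds
  refine hFat.congr (Filter.eventuallyEq_of_mem hmemnhds ?_)
  rintro ⟨x, t⟩ hw
  have hx : x ∈ V z₀ := hw.1
  show F (x, t) = L x (⟨x, hVz x⟩, t)
  rw [hF_def]
  simp only [dif_pos hx]
  exact (congrFun (huniq x hx) t).symm

private lemma myProjIccClamp (t : ℝ) :
    Set.projIcc (0:ℝ) 1 zero_le_one (max (min t 1) 0) = Set.projIcc (0:ℝ) 1 zero_le_one t := by
  apply Subtype.ext
  rw [Set.projIcc_of_mem _ ⟨le_max_right _ _, max_le (min_le_right _ _) zero_le_one⟩]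
  simp only [Set.coe_projIcc]
  rw [max_comm, min_comm]

private lemma myProjIccZero : Set.projIcc (0:ℝ) 1 zero_le_one 0 = 0 :=
  Subtype.ext (by simp [Set.coe_projIcc])

private lemma myProjIccOne : Set.projIcc (0:ℝ) 1 zero_le_one 1 = 1 :=
  Subtype.ext (by simp [Set.coe_projIcc])


variable {m n : ℕ}
variable {M : Type u} [TopologicalSpace M] [ChartedSpace (EuclideanSpace ℝ (Fin m)) M]
  [IsManifold (𝓡 m) ((⊤ : ℕ∞) : WithTop ℕ∞) M] [CompactSpace M] [ConnectedSpace M]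
variable {N : Type u} [TopologicalSpace N] [ChartedSpace (EuclideanSpace ℝ (Fin n)) N]
  [IsManifold (𝓡 n) ((⊤ : ℕ∞) : WithTop ℕ∞) N] [ConnectedSpace N]

/-- Remark 1.16 (root case inequality): for a `d`-fold covering `p : Ñ → N` and a lifting
`f̃` of `f`, one has `MC(f,*) ≥ d · MC(f̃,*̃)`. -/
theorem MC_root_ge_card_mul_MC_lift {Ntil : Type u} [TopologicalSpace Ntil]
    [ConnectedSpace Ntil] (hm : 1 ≤ m) (hn : 1 ≤ n)
    (p : Ntil → N) (hcov : IsCoveringMap p) (d : ℕ)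
    (hfib : ∀ y : N, Finite (p ⁻¹' {y}) ∧ Nat.card (p ⁻¹' {y}) = d)
    (f : C(M, N)) (ftil : C(M, Ntil)) (hlift : ∀ x : M, p (ftil x) = f x)
    (y : N) (ytil : Ntil) (hy : p ytil = y) :
    (d : ℕ∞) * MC ftil (ContinuousMap.const M ytil) ≤ MC f (ContinuousMap.const M y) := by
  classical
  haveI hNlpc : LocallyPathConnectedSpace N :=
    myLocPathConnected (fun x => ⟨chartAt (EuclideanSpace ℝ (Fin n)) x, mem_chart_source _ x⟩)
  haveI hNtlpc : LocallyPathConnectedSpace Ntil := myLocPathConnected (fun x => by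
    obtain ⟨e, he, -⟩ := hcov.isLocalHomeomorph x
    exact ⟨e, he⟩)
  haveI : PathConnectedSpace Ntil := pathConnectedSpace_iff_connectedSpace.mpr inferInstance
  haveI : Finite ↥(p ⁻¹' {y}) := (hfib y).1
  haveI : Fintype ↥(p ⁻¹' {y}) := Fintype.ofFinite _
  refine le_sInf ?_
  rintro k ⟨g₁, g₂, h₁, h₂, rfl⟩
  -- Lift the homotopy from `f` to `g₁`, starting at `ftil`.
  obtain ⟨K₁⟩ := h₁.symm
  set H₁ : M × ℝ → N := fun w => K₁ (Set.projIcc (0:ℝ) 1 zero_le_one w.2, w.1) with hH₁_def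
  have hH₁c : Continuous H₁ :=
    K₁.continuous.comp ((continuous_projIcc.comp continuous_snd).prodMk continuous_fst)
  have hH₁stop : ∀ z t, H₁ (z, t) = H₁ (z, max (min t 1) 0) := by
    intro z t
    simp only [hH₁_def]
    rw [myProjIccClamp]
  have hH₁0 : ∀ z : M, p (ftil z) = H₁ (z, 0) := by
    intro z
    simp only [hH₁_def]
    rw [myProjIccZero, K₁.apply_zero]
    exact hlift z
  obtain ⟨G₁, hG₁c, hG₁p, hG₁0⟩ :=
    myHLP hcov H₁ hH₁c hH₁stop (fun x => ftil x) ftil.continuous hH₁0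
  set gt1 : C(M, Ntil) :=
    ⟨fun x => G₁ (x, 1), hG₁c.comp (continuous_id.prodMk continuous_const)⟩ with hgt1_def
  have hgt1p : ∀ x : M, p (gt1 x) = g₁ x := by
    intro x
    have h := hG₁p (x, 1)
    simp only [hH₁_def] at h
    rw [myProjIccOne, K₁.apply_one] at h
    exact h
  have hgt1h : gt1.Homotopic ftil := by
    refine ContinuousMap.Homotopic.symm ⟨?_⟩
    exact
      { toFun := fun q => G₁ (q.2, (q.1 : ℝ)),
        continuous_toFun := hG₁c.comp
          (continuous_snd.prodMk (continuous_subtype_val.comp continuous_fst)),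
        map_zero_left := fun x => hG₁0 x,
        map_one_left := fun x => rfl }
  -- Lift the homotopy from `const y` to `g₂`, starting at each point of the fiber.
  obtain ⟨K₂⟩ := h₂.symm
  set H₂ : M × ℝ → N := fun w => K₂ (Set.projIcc (0:ℝ) 1 zero_le_one w.2, w.1) with hH₂_def
  have hH₂c : Continuous H₂ :=
    K₂.continuous.comp ((continuous_projIcc.comp continuous_snd).prodMk continuous_fst)
  have hH₂stop : ∀ z t, H₂ (z, t) = H₂ (z, max (min t 1) 0) := by
    intro z t
    simp only [hH₂_def]
    rw [myProjIccClamp]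
  have hH₂0 : ∀ z : M, H₂ (z, 0) = y := by
    intro z
    simp only [hH₂_def]
    rw [myProjIccZero, K₂.apply_zero]
    rfl
  have lifts : ∀ i : ↥(p ⁻¹' {y}), ∃ G : M × ℝ → Ntil, Continuous G ∧
      (∀ w, p (G w) = H₂ w) ∧ ∀ z : M, G (z, 0) = i.1 :=
    fun i => myHLP hcov H₂ hH₂c hH₂stop (fun _ => i.1) continuous_const
      (fun z => by rw [hH₂0 z]; exact i.2)
  choose G₂ hG₂c hG₂p hG₂0 using lifts
  set gt2 : ↥(p ⁻¹' {y}) → C(M, Ntil) := fun i =>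
    ⟨fun x => G₂ i (x, 1), (hG₂c i).comp (continuous_id.prodMk continuous_const)⟩ with hgt2_def
  have hgt2p : ∀ i x, p (gt2 i x) = g₂ x := by
    intro i x
    have h := hG₂p i (x, 1)
    simp only [hH₂_def] at h
    rw [myProjIccOne, K₂.apply_one] at h
    exact h
  have hgt2h : ∀ i, (gt2 i).Homotopic (ContinuousMap.const M ytil) := by
    intro i
    have h1 : (ContinuousMap.const M i.1).Homotopic (gt2 i) :=
      ⟨{ toFun := fun q => G₂ i (q.2, (q.1 : ℝ)),
         continuous_toFun := (hG₂c i).comp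
           (continuous_snd.prodMk (continuous_subtype_val.comp continuous_fst)),
         map_zero_left := fun x => hG₂0 i x,
         map_one_left := fun x => rfl }⟩
    have h2 : (ContinuousMap.const M i.1).Homotopic (ContinuousMap.const M ytil) := by
      obtain ⟨γ⟩ := PathConnectedSpace.joined i.1 ytil
      exact
        ⟨{ toFun := fun q => γ q.1,
           continuous_toFun := γ.continuous.comp continuous_fst,
           map_zero_left := fun x => γ.source,
           map_one_left := fun x => γ.target }⟩
    exact h1.symm.trans h2
  -- The coincidence sets upstairs
  set Cs : ↥(p ⁻¹' {y}) → Set M := fun i => {x | gt1 x = gt2 i x} with hCs_def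
  have hμ : ∀ i, MC ftil (ContinuousMap.const M ytil) ≤ (Cs i).encard := fun i =>
    sInf_le ⟨gt1, gt2 i, hgt1h, hgt2h i, rfl⟩
  have hsub : ∀ i, Cs i ⊆ {x | g₁ x = g₂ x} := by
    intro i x hx
    have h : p (gt1 x) = p (gt2 i x) := by rw [hx]
    rw [hgt1p x, hgt2p i x] at h
    exact h
  have hdisj : ∀ i j, i ≠ j → Disjoint (Cs i) (Cs j) := by
    intro i j hij
    rw [Set.disjoint_left]
    intro x hxi hxj
    refine hij ?_
    have hx1 : G₂ i (x, 1) = G₂ j (x, 1) := (Set.mem_setOf_eq ▸ hxi).symm.trans hxj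
    have heq : G₂ i = G₂ j :=
      hcov.eq_of_comp_eq (hG₂c i) (hG₂c j)
        (funext fun w => by
          simp only [Function.comp_apply]
          rw [hG₂p i w, hG₂p j w])
        (x, 1) hx1
    apply Subtype.ext
    rw [← hG₂0 i x, ← hG₂0 j x, heq]
  have hcard : Fintype.card ↥(p ⁻¹' {y}) = d := by
    rw [← Nat.card_eq_fintype_card]
    exact (hfib y).2
  calc (d : ℕ∞) * MC ftil (ContinuousMap.const M ytil)
      = (Fintype.card ↥(p ⁻¹' {y}) : ℕ∞) * MC ftil (ContinuousMap.const M ytil) := by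
        rw [hcard]
    _ ≤ ({x | g₁ x = g₂ x} : Set M).encard :=
        myEncardAux Cs _ hsub hdisj _ hμ
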